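/- Let X be a subspace of a Banach space Z and let M ⊆ X* be a closed subspace that is boundedly extendable onto Z, i.e., there exists an isomorphic embedding π: M → Z* with (π(f))(x) = f(x) for all f ∈ M, x ∈ X. Suppose M is quasibasic in X* with witnessing finite-rank operators u_n(x) = sum_{i=1}^{p(n)} x*_{i,n}(x) x_{i,n}, x*_{i,n} ∈ M, x_{i,n} ∈ X, u_n(x) → x. Then X^⊥ = {z* ∈ Z* : z*|_X = 0} is a complemented subspace of Z*. -/

import Mathlib

open NormedSpace Filter

/-- Limit of a bounded real sequence along an ultrafilter exists. -/
lemma ulim_exists (U : Ultrafilter ℕ) {g : ℕ → ℝ} {C : ℝ} (h : ∀ n, |g n| ≤ C) :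
    ∃ a, Tendsto g (U : Filter ℕ) (nhds a) := by
  have h1 : ∀ n, g n ∈ Set.Icc (-C) C := fun n => abs_le.mp (h n)
  have hle : (U.map g : Filter ℝ) ≤ Filter.principal (Set.Icc (-C) C) := by
    rw [Ultrafilter.coe_map, le_principal_iff, mem_map]
    exact Filter.univ_mem' h1
  obtain ⟨a, -, ha⟩ := isCompact_Icc.ultrafilter_le_nhds (U.map g) hle
  exact ⟨a, by rwa [Ultrafilter.coe_map] at ha⟩

set_option maxHeartbeats 1000000 in
/-- Let `X` be a closed subspace of a Banach space `Z` and `M ⊆ X*` a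
closed subspace that is boundedly extendable onto `Z` (via an isomorphic embedding
`π : M → Z*` with `π(f)(x) = f(x)` for `x ∈ X`). If `M` is quasibasic in `X*`, with
witnessing finite-rank operators `u n x = ∑ i, x*_{i,n}(x) • x_{i,n}` (`x*_{i,n} ∈ M`)
converging pointwise to the identity, then `X^⊥ = {z* ∈ Z* : z*|_X = 0}` is a
complemented subspace of `Z*`. -/
theorem annihilator_complemented_of_boundedly_extendable_quasibasic
    {Z : Type*} [NormedAddCommGroup Z] [NormedSpace ℝ Z] [CompleteSpace Z]
    (X : Submodule ℝ Z) (hXc : IsClosed (X : Set Z))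
    (M : Submodule ℝ (StrongDual ℝ X)) (hMc : IsClosed (M : Set (StrongDual ℝ X)))
    (π : M →L[ℝ] StrongDual ℝ Z)
    (hπemb : ∃ c : ℝ, 0 < c ∧ ∀ f : M, c * ‖f‖ ≤ ‖π f‖)
    (hπext : ∀ (f : M) (x : X), (π f) (x : Z) = (f : StrongDual ℝ X) x)
    (u : ℕ → X →L[ℝ] X)
    (hform : ∀ n, ∃ (k : ℕ) (g : Fin k → M) (v : Fin k → X),
      ∀ x : X, u n x = ∑ i, ((g i : StrongDual ℝ X) x) • v i)
    (hconv : ∀ x : X, Tendsto (fun n => u n x) atTop (nhds x)) :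
    ∃ Q : StrongDual ℝ Z →L[ℝ] StrongDual ℝ Z,
      Q.comp Q = Q ∧
      Set.range Q = {g : StrongDual ℝ Z | ∀ x ∈ X, g x = 0} := by
  haveI : CompleteSpace X := hXc.completeSpace_coe
  choose k g v hf using hform
  -- uniform bound on ‖u n‖ (Banach–Steinhaus)
  have hbd : ∀ x : X, ∃ C, ∀ n, ‖u n x‖ ≤ C := by
    intro x
    obtain ⟨C, hC⟩ := ((hconv x).norm).bddAbove_range
    exact ⟨C, fun n => hC (Set.mem_range_self n)⟩
  obtain ⟨Cu, hCu⟩ := banach_steinhaus hbd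
  have hCu0 : 0 ≤ Cu := le_trans (norm_nonneg _) (hCu 0)
  obtain ⟨Cπ, hCπ0, hCπ⟩ : ∃ C, 0 < C ∧ ∀ f : M, ‖π f‖ ≤ C * ‖f‖ := by
    letI : NormedSpace ℝ M := @Submodule.normedSpace ℝ ℝ _ _ _ (StrongDual ℝ X) _ _ _ _ M
    let π' : M →ₗ[ℝ] StrongDual ℝ Z := { toFun := π, map_add' := π.map_add, map_smul' := π.map_smul }
    exact SemilinearMapClass.bound_of_continuous π' π.continuous
  set K : ℝ := Cπ * Cu with hK
  have hK0 : 0 ≤ K := mul_nonneg hCπ0.le hCu0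
  -- the finite-rank "adjoint" into M
  set m : ℕ → StrongDual ℝ Z → M := fun n z => ∑ i, (z ((v n i : X) : Z)) • g n i with hm
  have hmcoe : ∀ n (z : StrongDual ℝ Z) (x : X),
      ((m n z : StrongDual ℝ X)) x = z ((u n x : X) : Z) := by
    intro n z x
    have h1 : ((m n z : StrongDual ℝ X)) x = ∑ i, z ((v n i : X) : Z) * (g n i : StrongDual ℝ X) x := by
      simp [hm, Submodule.coe_sum]
    rw [h1, hf n x]
    push_cast
    rw [map_sum]
    simp [mul_comm]
  have hmadd : ∀ n (z z' : StrongDual ℝ Z), m n (z + z') = m n z + m n z' := by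
    intro n z z'
    simp [hm, add_smul, Finset.sum_add_distrib]
  have hmsmul : ∀ n (c : ℝ) (z : StrongDual ℝ Z), m n (c • z) = c • m n z := by
    intro n c z
    simp [hm, smul_smul, Finset.smul_sum]
  -- norm bound for m
  have hmnorm : ∀ n (z : StrongDual ℝ Z), ‖m n z‖ ≤ Cu * ‖z‖ := by
    intro n z
    show ‖(m n z : StrongDual ℝ X)‖ ≤ Cu * ‖z‖
    refine ContinuousLinearMap.opNorm_le_bound _ (mul_nonneg hCu0 (norm_nonneg z)) fun x => ?_
    rw [hmcoe]
    calc ‖z ((u n x : X) : Z)‖ ≤ ‖z‖ * ‖((u n x : X) : Z)‖ := z.le_opNorm _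
      _ = ‖z‖ * ‖u n x‖ := by rw [Submodule.norm_coe]
      _ ≤ ‖z‖ * (‖u n‖ * ‖x‖) := by
          exact mul_le_mul_of_nonneg_left ((u n).le_opNorm x) (norm_nonneg z)
      _ ≤ ‖z‖ * (Cu * ‖x‖) := by
          have := mul_le_mul_of_nonneg_right (hCu n) (norm_nonneg x)
          exact mul_le_mul_of_nonneg_left this (norm_nonneg z)
      _ = Cu * ‖z‖ * ‖x‖ := by ring
  -- the approximating operators
  set α : ℕ → StrongDual ℝ Z → StrongDual ℝ Z := fun n z => π (m n z) with hα
  have hαbd : ∀ n (z : StrongDual ℝ Z) (w : Z), |α n z w| ≤ K * ‖z‖ * ‖w‖ := by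
    intro n z w
    have h1 : ‖α n z‖ ≤ K * ‖z‖ := by
      calc ‖α n z‖ ≤ Cπ * ‖m n z‖ := hCπ _
        _ ≤ Cπ * (Cu * ‖z‖) :=
            mul_le_mul_of_nonneg_left (hmnorm n z) hCπ0.le
        _ = K * ‖z‖ := by rw [hK]; ring
    calc |α n z w| = ‖α n z w‖ := (Real.norm_eq_abs _).symm
      _ ≤ ‖α n z‖ * ‖w‖ := (α n z).le_opNorm w
      _ ≤ K * ‖z‖ * ‖w‖ := mul_le_mul_of_nonneg_right h1 (norm_nonneg w)
  have hαX : ∀ n (z : StrongDual ℝ Z) (x : X), α n z ((x : X) : Z) = z ((u n x : X) : Z) := by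
    intro n z x
    rw [hα]
    simp only
    rw [hπext (m n z) x, hmcoe]
  -- ultrafilter limit
  set U : Ultrafilter ℕ := Ultrafilter.of atTop with hUdef
  have hU : (U : Filter ℕ) ≤ atTop := Ultrafilter.of_le _
  have hex : ∀ (z : StrongDual ℝ Z) (w : Z), ∃ a, Tendsto (fun n => α n z w) (U : Filter ℕ) (nhds a) :=
    fun z w => ulim_exists U (fun n => hαbd n z w)
  choose A hA using hex
  have hAle : ∀ (z : StrongDual ℝ Z) (w : Z), |A z w| ≤ K * ‖z‖ * ‖w‖ := fun z w =>
    le_of_tendsto (hA z w).abs (Filter.Eventually.of_forall fun n => hαbd n z w)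
  -- linearity of A in w
  have hAaddw : ∀ (z : StrongDual ℝ Z) (w w' : Z), A z (w + w') = A z w + A z w' := by
    intro z w w'
    refine tendsto_nhds_unique (hA z (w + w')) ?_
    have := (hA z w).add (hA z w')
    simpa [map_add] using this
  have hAsmulw : ∀ (z : StrongDual ℝ Z) (c : ℝ) (w : Z), A z (c • w) = c * A z w := by
    intro z c w
    refine tendsto_nhds_unique (hA z (c • w)) ?_
    have := (hA z w).const_mul c
    simpa [map_smul] using this
  -- linearity of A in z
  have hAaddz : ∀ (z z' : StrongDual ℝ Z) (w : Z), A (z + z') w = A z w + A z' w := by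
    intro z z' w
    refine tendsto_nhds_unique (hA (z + z') w) ?_
    have := (hA z w).add (hA z' w)
    have heq : (fun n => α n z w + α n z' w) = fun n => α n (z + z') w := by
      funext n
      rw [hα]
      simp only
      rw [hmadd, map_add]
      simp
    rwa [heq] at this
  have hAsmulz : ∀ (c : ℝ) (z : StrongDual ℝ Z) (w : Z), A (c • z) w = c * A z w := by
    intro c z w
    refine tendsto_nhds_unique (hA (c • z) w) ?_
    have := (hA z w).const_mul c
    have heq : (fun n => c * α n z w) = fun n => α n (c • z) w := by
      funext n
      rw [hα]
      simp only
      rw [hmsmul, map_smul]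
      simp
    rwa [heq] at this
  -- build P
  set Pz : StrongDual ℝ Z → StrongDual ℝ Z := fun z => LinearMap.mkContinuous
    { toFun := A z, map_add' := hAaddw z, map_smul' := fun c w => hAsmulw z c w }
    (K * ‖z‖) (fun w => by
      rw [Real.norm_eq_abs]
      calc |A z w| ≤ K * ‖z‖ * ‖w‖ := hAle z w) with hPz
  have hPzapply : ∀ (z : StrongDual ℝ Z) (w : Z), Pz z w = A z w := fun z w => rfl
  set P : StrongDual ℝ Z →L[ℝ] StrongDual ℝ Z := LinearMap.mkContinuous
    { toFun := Pz,
      map_add' := fun z z' => by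
        ext w
        simp [hPzapply, hAaddz]
      map_smul' := fun c z => by
        ext w
        simp [hPzapply, hAsmulz] }
    K (fun z => by
      refine ContinuousLinearMap.opNorm_le_bound _ (mul_nonneg hK0 (norm_nonneg z)) fun w => ?_
      show ‖A z w‖ ≤ K * ‖z‖ * ‖w‖
      rw [Real.norm_eq_abs]
      exact hAle z w) with hP
  have hPapply : ∀ (z : StrongDual ℝ Z) (w : Z), P z w = A z w := fun z w => rfl
  -- P z agrees with z on X
  have hPX : ∀ (z : StrongDual ℝ Z) (x : X), P z ((x : X) : Z) = z ((x : X) : Z) := by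
    intro z x
    rw [hPapply]
    refine tendsto_nhds_unique (hA z ((x : X) : Z)) ?_
    have h1 : Tendsto (fun n => z ((u n x : X) : Z)) atTop (nhds (z ((x : X) : Z))) := by
      have hc : Continuous fun y : X => z ((y : X) : Z) :=
        z.continuous.comp continuous_subtype_val
      exact (hc.tendsto x).comp (hconv x)
    have h2 := h1.mono_left hU
    have heq : (fun n => z ((u n x : X) : Z)) = fun n => α n z ((x : X) : Z) := by
      funext n; rw [hαX]
    rwa [heq] at h2
  -- P kills annihilator elements
  have hPzero : ∀ (z : StrongDual ℝ Z), (∀ x ∈ X, z x = 0) → P z = 0 := by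
    intro z hz
    ext w
    rw [hPapply]
    have hαz : ∀ n, α n z w = 0 := by
      intro n
      have hmz : m n z = 0 := by
        rw [hm]
        simp only
        refine Finset.sum_eq_zero fun i _ => ?_
        rw [hz ((v n i : X) : Z) (v n i).2]
        simp
      rw [hα]
      simp only
      rw [hmz]
      simp
    have : Tendsto (fun n => α n z w) (U : Filter ℕ) (nhds 0) := by
      simp only [hαz]
      exact tendsto_const_nhds
    have := tendsto_nhds_unique (hA z w) this
    simpa using this
  -- the projection
  refine ⟨ContinuousLinearMap.id ℝ (StrongDual ℝ Z) - P, ?_, ?_⟩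
  · -- idempotence
    ext z w
    have hQz : ∀ x ∈ X, (z - P z) x = 0 := by
      intro x hx
      have := hPX z ⟨x, hx⟩
      simp only [ContinuousLinearMap.sub_apply]
      rw [this]
      ring
    have hPQz : P (z - P z) = 0 := hPzero _ hQz
    have h3 : (P (z - P z)) w = 0 := by rw [hPQz]; simp
    simp only [map_sub, ContinuousLinearMap.sub_apply] at h3
    simp only [ContinuousLinearMap.comp_apply, ContinuousLinearMap.sub_apply,
      ContinuousLinearMap.id_apply, ContinuousLinearMap.coe_sub', Pi.sub_apply, hPQz,
      ContinuousLinearMap.zero_apply]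
    linarith
  · -- range
    apply subset_antisymm
    · rintro _ ⟨z, rfl⟩ x hx
      have := hPX z ⟨x, hx⟩
      simp only [ContinuousLinearMap.sub_apply, ContinuousLinearMap.id_apply,
        ContinuousLinearMap.coe_sub', Pi.sub_apply]
      rw [this]
      ring
    · intro gz hgz
      refine ⟨gz, ?_⟩
      have : P gz = 0 := hPzero gz hgz
      simp [ContinuousLinearMap.sub_apply, this]
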